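/- arXiv:1804.07930 — 3 statements merged into one kernel-verified Lean document; each statement's English description precedes it below -/
import Mathlib

section
/- Let s ∈ ℂ, let j be a nonnegative integer, and let z ∈ ℂ with Re(z) > 0. Then Σ_{ℓ=0}^{j} binom(j,ℓ) (−z/2)^ℓ K_{s+j+ℓ}(z) / Γ(s+ℓ+1) = (−z/2)^j K_s(z) / Γ(s+j+1). -/
open scoped Real Topology
open Complex MeasureTheory

open Filter

/-- Modified Bessel function of the second kind, defined by its integral representation
(valid for `Re z > 0`). -/
noncomputable def besselK (s z : ℂ) : ℂ :=
  ∫ t in Set.Ioi (0 : ℝ), Complex.exp (-z * (Real.cosh t : ℂ)) * Complex.cosh (s * (t : ℂ))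

lemma quad_le_cosh (t : ℝ) (ht : 0 ≤ t) : t ^ 2 / 8 ≤ Real.cosh t := by
  have h1 := Real.add_one_le_exp (t / 2)
  have h2 : Real.exp t = Real.exp (t / 2) * Real.exp (t / 2) := by
    rw [← Real.exp_add]; ring_nf
  have h3 := Real.exp_pos (-t)
  rw [Real.cosh_eq]
  nlinarith [Real.exp_pos (t / 2)]

lemma integrable_gauss_lin (b c : ℝ) (hb : 0 < b) :
    Integrable (fun t : ℝ => Real.exp (-b * t ^ 2 + c * t)) := by
  have h := integrable_cexp_quadratic (b := (b : ℂ)) (by simpa using hb) (c : ℂ) 0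
  have := h.norm
  refine this.congr ?_
  filter_upwards with t
  rw [show -(b:ℂ) * (t:ℂ) ^ 2 + (c:ℂ) * (t:ℂ) + 0 = ((-b * t ^ 2 + c * t : ℝ) : ℂ) by
    push_cast; ring]
  rw [Complex.norm_exp, Complex.ofReal_re]

lemma integrableOn_dom (a c : ℝ) (ha : 0 < a) :
    IntegrableOn (fun t : ℝ => Real.exp (-a * Real.cosh t + c * t)) (Set.Ioi 0) := by
  refine ((integrable_gauss_lin (a / 8) c (by positivity)).integrableOn).mono' ?_ ?_
  · exact (Real.continuous_exp.comp (by fun_prop)).aestronglyMeasurable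
  · filter_upwards [MeasureTheory.ae_restrict_mem measurableSet_Ioi] with t ht
    rw [Real.norm_eq_abs, abs_of_pos (Real.exp_pos _)]
    apply Real.exp_le_exp.2
    have := quad_le_cosh t (le_of_lt ht)
    nlinarith

lemma norm_cexp_le (u : ℂ) : ‖Complex.exp u‖ ≤ Real.exp ‖u‖ := by
  rw [Complex.norm_exp]
  exact Real.exp_le_exp.2 ((le_abs_self u.re).trans (Complex.abs_re_le_norm u))

lemma norm_cosh_le (u : ℂ) : ‖Complex.cosh u‖ ≤ Real.exp ‖u‖ := by
  rw [Complex.cosh]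
  calc ‖(Complex.exp u + Complex.exp (-u)) / 2‖
      ≤ (‖Complex.exp u‖ + ‖Complex.exp (-u)‖) / 2 := by
        rw [norm_div]
        gcongr
        · exact norm_add_le _ _
        · norm_num
    _ ≤ (Real.exp ‖u‖ + Real.exp ‖u‖) / 2 := by
        gcongr
        · exact norm_cexp_le u
        · simpa using norm_cexp_le (-u)
    _ = Real.exp ‖u‖ := by ring

lemma norm_sinh_le (u : ℂ) : ‖Complex.sinh u‖ ≤ Real.exp ‖u‖ := by
  rw [Complex.sinh]
  calc ‖(Complex.exp u - Complex.exp (-u)) / 2‖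
      ≤ (‖Complex.exp u‖ + ‖Complex.exp (-u)‖) / 2 := by
        rw [norm_div]
        gcongr
        · exact norm_sub_le _ _
        · norm_num
    _ ≤ (Real.exp ‖u‖ + Real.exp ‖u‖) / 2 := by
        gcongr
        · exact norm_cexp_le u
        · simpa using norm_cexp_le (-u)
    _ = Real.exp ‖u‖ := by ring


lemma tendsto_quad_atBot (a c : ℝ) (ha : 0 < a) :
    Tendsto (fun t : ℝ => -a * Real.cosh t + c * t) atTop atBot := by
  have hq : Tendsto (fun t : ℝ => t * (-(a / 8) * t + c)) atTop atBot := by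
    apply Tendsto.atTop_mul_atBot₀ tendsto_id
    apply tendsto_atBot_add_const_right
    have h1 : Tendsto (fun t : ℝ => (a / 8) * t) atTop atTop :=
      (tendsto_const_mul_atTop_of_pos (by positivity)).2 tendsto_id
    have h2 : Tendsto (fun t : ℝ => -(a / 8 * t)) atTop atBot := tendsto_neg_atBot_iff.2 h1
    exact h2.congr fun t => by ring
  apply tendsto_atBot_mono' _ _ hq
  filter_upwards [eventually_ge_atTop (0 : ℝ)] with t ht
  have h := quad_le_cosh t ht
  nlinarith

lemma tendsto_dom_zero (a c : ℝ) (ha : 0 < a) :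
    Tendsto (fun t : ℝ => Real.exp (-a * Real.cosh t + c * t)) atTop (𝓝 0) :=
  Real.tendsto_exp_atBot.comp (tendsto_quad_atBot a c ha)

lemma integrableOn_aux (z : ℂ) (hz : 0 < z.re) (f : ℝ → ℂ) (C c : ℝ) (hC : 0 ≤ C)
    (hf : Continuous f) (hb : ∀ t : ℝ, 0 ≤ t → ‖f t‖ ≤ C * Real.exp (c * t)) :
    IntegrableOn (fun t : ℝ => Complex.exp (-z * (Real.cosh t : ℂ)) * f t) (Set.Ioi 0) := by
  refine Integrable.mono' ((integrableOn_dom z.re c hz).const_mul C) ?_ ?_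
  · exact (Continuous.mul (by fun_prop) hf).aestronglyMeasurable
  · filter_upwards [MeasureTheory.ae_restrict_mem measurableSet_Ioi] with t ht
    rw [norm_mul]
    have h1 : ‖Complex.exp (-z * (Real.cosh t : ℂ))‖ = Real.exp (-z.re * Real.cosh t) := by
      rw [Complex.norm_exp]
      congr 1
      simp [Complex.mul_re]
    rw [h1]
    calc Real.exp (-z.re * Real.cosh t) * ‖f t‖
        ≤ Real.exp (-z.re * Real.cosh t) * (C * Real.exp (c * t)) := by
          gcongr
          exact hb t (le_of_lt ht)
      _ = C * Real.exp (-z.re * Real.cosh t + c * t) := by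
          rw [Real.exp_add]; ring

lemma norm_cosh_mul_le (w : ℂ) (t : ℝ) (ht : 0 ≤ t) :
    ‖Complex.cosh (w * t)‖ ≤ Real.exp (‖w‖ * t) := by
  refine (norm_cosh_le _).trans ?_
  apply Real.exp_le_exp.2
  rw [norm_mul, Complex.norm_real, Real.norm_eq_abs, _root_.abs_of_nonneg ht]

lemma norm_sinh_mul_le (w : ℂ) (t : ℝ) (ht : 0 ≤ t) :
    ‖Complex.sinh (w * t)‖ ≤ Real.exp (‖w‖ * t) := by
  refine (norm_sinh_le _).trans ?_
  apply Real.exp_le_exp.2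
  rw [norm_mul, Complex.norm_real, Real.norm_eq_abs, _root_.abs_of_nonneg ht]

lemma integrableOn_besselK (w z : ℂ) (hz : 0 < z.re) :
    IntegrableOn (fun t : ℝ => Complex.exp (-z * (Real.cosh t : ℂ)) * Complex.cosh (w * t))
      (Set.Ioi 0) := by
  refine integrableOn_aux z hz _ 1 ‖w‖ one_pos.le (by fun_prop) fun t ht => ?_
  rw [one_mul]
  exact norm_cosh_mul_le w t ht

lemma sinh_mul_sinh_id (s : ℂ) (t : ℝ) :
    (Real.sinh t : ℂ) * Complex.sinh ((s + 1) * t) =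
      (Complex.cosh ((s + 2) * t) - Complex.cosh (s * t)) / 2 := by
  rw [Complex.ofReal_sinh]
  have h1 : (s + 2) * (t : ℂ) = (s + 1) * t + t := by ring
  have h2 : s * (t : ℂ) = (s + 1) * t - t := by ring
  rw [h1, h2, Complex.cosh_add, Complex.cosh_sub]
  ring

lemma besselK_rec (s z : ℂ) (hz : 0 < z.re) :
    (s + 1) * besselK (s + 1) z = z / 2 * (besselK (s + 2) z - besselK s z) := by
  set G : ℂ → ℝ → ℂ := fun w t => Complex.exp (-z * (Real.cosh t : ℂ)) * Complex.cosh (w * t)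
    with hG
  set F : ℝ → ℂ := fun t => Complex.exp (-z * (Real.cosh t : ℂ)) * Complex.sinh ((s + 1) * t)
    with hF
  set F' : ℝ → ℂ := fun t =>
      Complex.exp (-z * (Real.cosh t : ℂ)) * (-z * Real.sinh t) * Complex.sinh ((s + 1) * t)
        + Complex.exp (-z * (Real.cosh t : ℂ)) * (Complex.cosh ((s + 1) * t) * (s + 1))
    with hF'
  have hsinh_bound : ∀ t : ℝ, 0 ≤ t → ‖(Real.sinh t : ℂ)‖ ≤ Real.exp t := by
    intro t ht
    rw [Complex.norm_real, Real.norm_eq_abs, Real.sinh_eq, abs_le]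
    have h1 : Real.exp (-t) ≤ 1 := by
      simpa using Real.exp_le_exp.mpr (neg_nonpos_of_nonneg ht)
    have h2 : (1 : ℝ) ≤ Real.exp t := Real.one_le_exp ht
    constructor <;> nlinarith [Real.exp_pos (-t), Real.exp_pos t]
  have hderiv : ∀ t : ℝ, HasDerivAt F (F' t) t := by
    intro t
    have hc : HasDerivAt (fun t : ℝ => -z * (Real.cosh t : ℂ)) (-z * Real.sinh t) t :=
      ((Real.hasDerivAt_cosh t).ofReal_comp).const_mul (-z)
    have h1 := hc.cexp
    have hlinC : HasDerivAt (fun w : ℂ => (s + 1) * w) (s + 1) (t : ℂ) := by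
      simpa using (hasDerivAt_id (t : ℂ)).const_mul (s + 1)
    have h2 : HasDerivAt (fun y : ℝ => Complex.sinh ((s + 1) * (y : ℂ)))
        (Complex.cosh ((s + 1) * (t : ℂ)) * (s + 1)) t := hlinC.csinh.comp_ofReal
    have := h1.mul h2
    simpa [hF', hF, Pi.mul_def] using this
  have hint : ∀ w : ℂ, IntegrableOn (G w) (Set.Ioi 0) := fun w => integrableOn_besselK w z hz
  have hF'int : IntegrableOn F' (Set.Ioi 0) := by
    have h1 : IntegrableOn (fun t : ℝ =>
        Complex.exp (-z * (Real.cosh t : ℂ)) * (-z * Real.sinh t * Complex.sinh ((s + 1) * t)))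
        (Set.Ioi 0) := by
      refine integrableOn_aux z hz _ ‖z‖ (1 + ‖s + 1‖) (norm_nonneg z) (by fun_prop)
        fun t ht => ?_
      rw [norm_mul, norm_mul, norm_neg]
      calc ‖z‖ * ‖(Real.sinh t : ℂ)‖ * ‖Complex.sinh ((s + 1) * t)‖
          ≤ ‖z‖ * Real.exp t * Real.exp (‖s + 1‖ * t) := by
            gcongr
            · exact hsinh_bound t ht
            · exact norm_sinh_mul_le _ t ht
        _ = ‖z‖ * Real.exp ((1 + ‖s + 1‖) * t) := by
            rw [mul_assoc, ← Real.exp_add, show t + ‖s + 1‖ * t = (1 + ‖s + 1‖) * t by ring]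
    have h2 : IntegrableOn (fun t : ℝ => G (s + 1) t * (s + 1)) (Set.Ioi 0) :=
      (hint (s + 1)).mul_const (s + 1)
    refine (h1.add h2).congr (Filter.Eventually.of_forall fun t => ?_)
    simp only [Pi.add_apply, hG, hF']
    ring
  have htends : Tendsto F atTop (𝓝 0) := by
    refine squeeze_zero_norm' ?_ (tendsto_dom_zero z.re ‖s + 1‖ hz)
    · filter_upwards [eventually_ge_atTop (0 : ℝ)] with t ht
      rw [hF]
      simp only [norm_mul]
      have h1 : ‖Complex.exp (-z * (Real.cosh t : ℂ))‖ = Real.exp (-z.re * Real.cosh t) := by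
        rw [Complex.norm_exp]
        congr 1
        simp [Complex.mul_re]
      rw [h1, Real.exp_add]
      gcongr
      · exact norm_sinh_mul_le _ t ht
  have key : ∫ t in Set.Ioi (0 : ℝ), F' t = 0 - F 0 :=
    integral_Ioi_of_hasDerivAt_of_tendsto (by fun_prop : Continuous F).continuousWithinAt
      (fun x _ => hderiv x) hF'int htends
  have hF0 : F 0 = 0 := by simp [hF]
  have hsplit : ∀ t : ℝ, F' t = (-z / 2) * G (s + 2) t + ((z / 2) * G s t + (s + 1) * G (s + 1) t) := by
    intro t
    have h := sinh_mul_sinh_id s t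
    simp only [hF', hG]
    linear_combination (-z * Complex.exp (-z * (Real.cosh t : ℂ))) * h
  have e2 : ∫ t in Set.Ioi (0 : ℝ), F' t =
      (-z / 2) * besselK (s + 2) z + ((z / 2) * besselK s z + (s + 1) * besselK (s + 1) z) := by
    have hb : ∀ w : ℂ, besselK w z = ∫ t in Set.Ioi (0 : ℝ), G w t := fun w => rfl
    rw [hb, hb, hb]
    rw [MeasureTheory.integral_congr_ae (Filter.Eventually.of_forall hsplit)]
    have hadd1 : IntegrableOn (fun t : ℝ => z / 2 * G s t + (s + 1) * G (s + 1) t)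
        (Set.Ioi 0) := ((hint s).const_mul _).add ((hint (s + 1)).const_mul _)
    rw [MeasureTheory.integral_add ((hint (s + 2)).const_mul (-z / 2)) hadd1,
      MeasureTheory.integral_add ((hint s).const_mul (z / 2)) ((hint (s + 1)).const_mul (s + 1)),
      MeasureTheory.integral_const_mul, MeasureTheory.integral_const_mul,
      MeasureTheory.integral_const_mul]
  rw [e2, hF0, sub_zero] at key
  linear_combination key

lemma besselK_rec' (w z : ℂ) (hz : 0 < z.re) :
    (-z / 2) * besselK w z = (-z / 2) * besselK (w + 2) z + (w + 1) * besselK (w + 1) z := by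
  linear_combination (-1 : ℂ) * besselK_rec w z hz

lemma besselK_neg (s z : ℂ) : besselK (-s) z = besselK s z := by
  unfold besselK
  refine MeasureTheory.integral_congr_ae (Filter.Eventually.of_forall fun t => ?_)
  simp only [neg_mul, Complex.cosh_neg]

lemma one_div_Gamma_rec (w : ℂ) : 1 / Complex.Gamma w = w / Complex.Gamma (w + 1) := by
  by_cases h : ∃ m : ℕ, w = -m
  · obtain ⟨m, rfl⟩ := h
    rw [Complex.Gamma_neg_nat_eq_zero]
    match m with
    | 0 => simp
    | (n+1) =>
      have e : -((n + 1 : ℕ) : ℂ) + 1 = -(n : ℂ) := by push_cast; ring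
      rw [e, Complex.Gamma_neg_nat_eq_zero]
      simp
  · push_neg at h
    have h0 : w ≠ 0 := fun h' => h 0 (by simp [h'])
    have hg : Complex.Gamma w ≠ 0 := Complex.Gamma_ne_zero h
    rw [Complex.Gamma_add_one w h0]
    field_simp

lemma choose_id (j k : ℕ) (hk : k ≤ j) :
    ((j.choose (k + 1) : ℂ)) * (k + 1) = (j.choose k : ℂ) * ((j : ℂ) - k) := by
  have h := Nat.choose_succ_right_eq j k
  have h2 := congrArg (Nat.cast (R := ℂ)) h
  push_cast [Nat.cast_sub hk] at h2
  linear_combination h2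

theorem stmt3 (s : ℂ) (j : ℕ) (z : ℂ) (hz : 0 < z.re) :
    (∑ l ∈ Finset.range (j + 1),
        (j.choose l : ℂ) * (-z / 2) ^ l * besselK (s + (j : ℂ) + (l : ℂ)) z /
          Complex.Gamma (s + (l : ℂ) + 1)) =
      (-z / 2) ^ j * besselK s z / Complex.Gamma (s + (j : ℂ) + 1) := by
  induction j generalizing s with
  | zero => simp
  | succ j ih =>
    by_cases hdeg : s + (j : ℂ) + 1 = 0
    · -- degenerate case : s = -(j+1)
      have hs : s = -(((j + 1) : ℕ) : ℂ) := by push_cast; linear_combination hdeg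
      have hzero : ∀ l ∈ Finset.range (j + 1 + 1), l ≠ j + 1 →
          ((j + 1).choose l : ℂ) * (-z / 2) ^ l * besselK (s + ((j + 1 : ℕ) : ℂ) + (l : ℂ)) z /
            Complex.Gamma (s + (l : ℂ) + 1) = 0 := by
        intro l hl hne
        have hlj : l ≤ j := by
          have := Finset.mem_range.1 hl; omega
        have h3 : s + (l : ℂ) + 1 = -(((j - l : ℕ)) : ℂ) := by
          rw [hs]; push_cast [Nat.cast_sub hlj]; ring
        rw [h3, Complex.Gamma_neg_nat_eq_zero, div_zero]
      rw [Finset.sum_eq_single_of_mem (j + 1) (Finset.self_mem_range_succ _) hzero]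
      have h1 : s + ((j + 1 : ℕ) : ℂ) + ((j + 1 : ℕ) : ℂ) = (((j + 1) : ℕ) : ℂ) := by
        rw [hs]; push_cast; ring
      have h2 : s + ((j + 1 : ℕ) : ℂ) + 1 = 1 := by rw [hs]; push_cast; ring
      rw [h1, h2, Nat.choose_self, Complex.Gamma_one]
      rw [hs, besselK_neg]
      norm_num
    · -- main case
      have hA : ∀ l : ℕ, (-z / 2) * besselK (s + (j : ℂ) + (l : ℂ)) z
          = (-z / 2) * besselK (s + (j : ℂ) + 1 + ((l + 1 : ℕ) : ℂ)) z
            + (s + (j : ℂ) + (l : ℂ) + 1) * besselK (s + (j : ℂ) + 1 + (l : ℂ)) z := by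
        intro l
        have h1 := besselK_rec' (s + (j : ℂ) + (l : ℂ)) z hz
        have e1 : s + (j : ℂ) + (l : ℂ) + 2 = s + (j : ℂ) + 1 + ((l + 1 : ℕ) : ℂ) := by
          push_cast; ring
        have e2 : s + (j : ℂ) + (l : ℂ) + 1 = s + (j : ℂ) + 1 + (l : ℂ) := by ring
        rw [e1, e2] at h1
        linear_combination h1
      have key : (s + (j : ℂ) + 1) * ∑ l ∈ Finset.range (j + 1 + 1),
            ((j + 1).choose l : ℂ) * (-z / 2) ^ l * besselK (s + ((j + 1 : ℕ) : ℂ) + (l : ℂ)) z /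
              Complex.Gamma (s + (l : ℂ) + 1)
          = (-z / 2) * ∑ l ∈ Finset.range (j + 1),
            (j.choose l : ℂ) * (-z / 2) ^ l * besselK (s + (j : ℂ) + (l : ℂ)) z /
              Complex.Gamma (s + (l : ℂ) + 1) := by
        set Q : ℕ → ℂ := fun m => (s + (j : ℂ) + (m : ℂ) + 1) * (j.choose m : ℂ) *
            (-z / 2) ^ m * besselK (s + (j : ℂ) + 1 + (m : ℂ)) z /
              Complex.Gamma (s + (m : ℂ) + 1) with hQdef
        set R : ℕ → ℂ := fun m => if m = 0 then 0 else (s + (m : ℂ)) * (j.choose (m - 1) : ℂ) *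
            (-z / 2) ^ m * besselK (s + (j : ℂ) + 1 + (m : ℂ)) z /
              Complex.Gamma (s + (m : ℂ) + 1) with hRdef
        have step1 : ∀ m ∈ Finset.range (j + 1 + 1),
            (s + (j : ℂ) + 1) * (((j + 1).choose m : ℂ) * (-z / 2) ^ m *
                besselK (s + ((j + 1 : ℕ) : ℂ) + (m : ℂ)) z / Complex.Gamma (s + (m : ℂ) + 1))
            = Q m + R m := by
          intro m hm
          have ecast : s + ((j + 1 : ℕ) : ℂ) + (m : ℂ) = s + (j : ℂ) + 1 + (m : ℂ) := by
            push_cast; ring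
          rw [ecast]
          simp only [hQdef, hRdef]
          match m with
          | 0 => norm_num [mul_div_assoc]
          | (k + 1) =>
            have hk : k ≤ j := by
              have := Finset.mem_range.1 hm; omega
            rw [if_neg (Nat.succ_ne_zero k)]
            simp only [Nat.succ_sub_one]
            have hch := choose_id j k hk
            have hpas : (((j + 1).choose (k + 1) : ℕ) : ℂ)
                = (j.choose k : ℂ) + (j.choose (k + 1) : ℂ) := by
              rw [Nat.choose_succ_succ]; push_cast; ring
            rw [hpas]
            push_cast
            linear_combination (-((-z / 2) ^ (k + 1) *
              besselK (s + (j : ℂ) + 1 + ((k : ℂ) + 1)) z /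
                Complex.Gamma (s + ((k : ℂ) + 1) + 1))) * hch
        calc (s + (j : ℂ) + 1) * ∑ l ∈ Finset.range (j + 1 + 1),
              ((j + 1).choose l : ℂ) * (-z / 2) ^ l *
                besselK (s + ((j + 1 : ℕ) : ℂ) + (l : ℂ)) z / Complex.Gamma (s + (l : ℂ) + 1)
            = ∑ m ∈ Finset.range (j + 1 + 1), (Q m + R m) := by
              rw [Finset.mul_sum]; exact Finset.sum_congr rfl step1
          _ = (∑ m ∈ Finset.range (j + 1 + 1), Q m) + ∑ m ∈ Finset.range (j + 1 + 1), R m :=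
              Finset.sum_add_distrib
          _ = ((∑ m ∈ Finset.range (j + 1), Q m) + Q (j + 1))
              + ((∑ l ∈ Finset.range (j + 1), R (l + 1)) + R 0) := by
              rw [Finset.sum_range_succ Q (j + 1), Finset.sum_range_succ' R (j + 1)]
          _ = ∑ l ∈ Finset.range (j + 1), (Q l + R (l + 1)) := by
              have hQ0 : Q (j + 1) = 0 := by
                simp [hQdef, Nat.choose_eq_zero_of_lt (Nat.lt_succ_self j)]
              have hR0 : R 0 = 0 := by simp [hRdef]
              rw [hQ0, hR0, add_zero, add_zero, ← Finset.sum_add_distrib]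
          _ = (-z / 2) * ∑ l ∈ Finset.range (j + 1),
              (j.choose l : ℂ) * (-z / 2) ^ l * besselK (s + (j : ℂ) + (l : ℂ)) z /
                Complex.Gamma (s + (l : ℂ) + 1) := by
              rw [Finset.mul_sum]
              refine Finset.sum_congr rfl fun l hl => ?_
              simp only [hQdef, hRdef]
              rw [if_neg (Nat.succ_ne_zero l)]
              simp only [Nat.succ_sub_one]
              have hg := one_div_Gamma_rec (s + (l : ℂ) + 1)
              have e3 : s + ((l + 1 : ℕ) : ℂ) + 1 = s + (l : ℂ) + 1 + 1 := by push_cast; ring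
              have e4 : s + ((l + 1 : ℕ) : ℂ) = s + (l : ℂ) + 1 := by push_cast; ring
              rw [e3, e4]
              have hAl := hA l
              linear_combination (-((j.choose l : ℂ) * (-z / 2) ^ l /
                  Complex.Gamma (s + (l : ℂ) + 1))) * hAl
                + (-((j.choose l : ℂ) * (-z / 2) ^ (l + 1) *
                    besselK (s + (j : ℂ) + 1 + ((l + 1 : ℕ) : ℂ)) z)) * hg
      have h2 : (-z / 2) * ((-z / 2) ^ j * besselK s z / Complex.Gamma (s + (j : ℂ) + 1))
          = (s + (j : ℂ) + 1) * ((-z / 2) ^ (j + 1) * besselK s z /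
              Complex.Gamma (s + ((j + 1 : ℕ) : ℂ) + 1)) := by
        have hg := one_div_Gamma_rec (s + (j : ℂ) + 1)
        have e5 : s + ((j + 1 : ℕ) : ℂ) + 1 = s + (j : ℂ) + 1 + 1 := by push_cast; ring
        rw [e5]
        linear_combination ((-z / 2) ^ (j + 1) * besselK s z) * hg
      apply mul_left_cancel₀ hdeg
      rw [key, ih s, h2]
end

section
/- Let A ∈ ℂ ∖ (−∞, 0] with Re(A²) = 1/2, let x > 0, and let s ∈ ℂ. Then J_s(Ax) J_s(conj(A)x) = Σ_{n=0}^∞ (x|A|²/2)^{s+2n} / (n! Γ(s+n+1)) · J_{s+2n}(x), and likewise I_s(Ax) I_s(conj(A)x) = Σ_{n=0}^∞ (x|A|²/2)^{s+2n} / (n! Γ(s+n+1)) · I_{s+2n}(x), both series on the right-hand sides being absolutely convergent. -/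
open scoped Real Topology
open Complex

/-- Bessel function of the first kind, defined by its power series
(principal branch of complex powers). -/
noncomputable def besselJ (s z : ℂ) : ℂ :=
  ∑' k : ℕ, (-1) ^ k * (z / 2) ^ (s + 2 * (k : ℂ)) /
    ((k.factorial : ℂ) * Complex.Gamma (s + (k : ℂ) + 1))

/-- Modified Bessel function of the first kind, defined by its power series
(principal branch of complex powers). -/
noncomputable def besselI (s z : ℂ) : ℂ :=
  ∑' k : ℕ, (z / 2) ^ (s + 2 * (k : ℂ)) / ((k.factorial : ℂ) * Complex.Gamma (s + (k : ℂ) + 1))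

section BesselHelpers
open Finset




noncomputable def rG (z : ℂ) : ℂ := (Complex.Gamma z)⁻¹

lemma rG_rec (z : ℂ) : rG z = z * rG (z + 1) := by
  rcases eq_or_ne z 0 with rfl | hz
  · simp [rG]
  · rw [rG, rG, Complex.Gamma_add_one z hz, mul_inv, ← mul_assoc, mul_inv_cancel₀ hz, one_mul]

lemma rG_bound (z : ℂ) : ∃ M : ℝ, 0 ≤ M ∧ ∀ n : ℕ, ‖rG (z + n + 1)‖ ≤ M := by
  set u : ℕ → ℝ := fun n => ‖rG (z + n + 1)‖ with hu
  have key : ∀ n : ℕ, ‖z‖ ≤ n → u (n + 1) ≤ u n := by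
    intro n hn
    have h1 : rG (z + n + 1) = (z + n + 1) * rG (z + (n+1 : ℕ) + 1) := by
      rw [rG_rec (z + n + 1)]; push_cast; ring_nf
    have h2 : (1 : ℝ) ≤ ‖z + n + 1‖ := by
      have h3 : ‖(n : ℂ) + 1‖ = (n : ℝ) + 1 := by
        rw [show ((n : ℂ) + 1) = ((n + 1 : ℝ) : ℂ) by push_cast; ring, Complex.norm_real]
        rw [Real.norm_eq_abs, _root_.abs_of_nonneg (by positivity)]
      have h4 : ‖(n : ℂ) + 1‖ ≤ ‖z + n + 1‖ + ‖z‖ := by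
        calc ‖(n : ℂ) + 1‖ = ‖(z + n + 1) - z‖ := by ring_nf
          _ ≤ ‖z + n + 1‖ + ‖z‖ := norm_sub_le _ _
      nlinarith
    calc u (n+1) = 1 * u (n+1) := (one_mul _).symm
      _ ≤ ‖z + n + 1‖ * u (n+1) := by
          apply mul_le_mul_of_nonneg_right h2 (norm_nonneg _)
      _ = u n := by rw [hu]; simp only; rw [h1, norm_mul]
  set N := ⌈‖z‖⌉₊ with hN
  refine ⟨∑ i ∈ range (N+1), u i, ?_, ?_⟩
  · exact Finset.sum_nonneg fun i _ => norm_nonneg _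
  · intro n
    rcases le_or_gt n N with h | h
    · exact Finset.single_le_sum (f := u) (fun i _ => norm_nonneg _)
        (show n ∈ Finset.range (N+1) from Finset.mem_range.mpr (by omega))
    · have : ∀ m : ℕ, N ≤ m → u m ≤ u N := by
        intro m hm
        induction m, hm using Nat.le_induction with
        | base => exact le_rfl
        | succ m hm ih =>
          exact le_trans (key m (le_trans (Nat.le_ceil _) (by exact_mod_cast hm))) ih
      exact le_trans (this n h.le) (Finset.single_le_sum (f := u) (fun i _ => norm_nonneg _)
        (show N ∈ Finset.range (N+1) from Finset.mem_range.mpr (by omega)))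

lemma chooseCast (k i : ℕ) :
    (k.choose (i+1) : ℂ) * ((i+1).factorial : ℂ) =
      (k.choose i : ℂ) * (i.factorial : ℂ) * ((k : ℂ) - i) := by
  rcases lt_trichotomy i k with h | rfl | h
  · have hnat : k.choose (i+1) * (i+1) = k.choose i * (k - i) := Nat.choose_succ_right_eq k i
    have hc : (k.choose (i+1) : ℂ) * ((i:ℂ)+1) = (k.choose i : ℂ) * ((k : ℂ) - i) := by
      have := congrArg (fun m : ℕ => (m : ℂ)) hnat
      push_cast [Nat.cast_sub h.le] at this
      linear_combination this
    calc (k.choose (i+1) : ℂ) * ((i+1).factorial : ℂ)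
        = ((k.choose (i+1) : ℂ) * ((i:ℂ)+1)) * (i.factorial : ℂ) := by
          push_cast [Nat.factorial_succ]; ring
      _ = (k.choose i : ℂ) * (i.factorial : ℂ) * ((k : ℂ) - i) := by rw [hc]; ring
  · simp [Nat.choose_succ_self]
  · rw [Nat.choose_eq_zero_of_lt (by omega), Nat.choose_eq_zero_of_lt h]
    simp

noncomputable def F (j k : ℕ) (s : ℂ) : ℂ :=
  ∑ n ∈ range (j+1), (j.choose n : ℂ) * (k.choose n : ℂ) * (n.factorial : ℂ) * rG (s + n + 1)

lemma F_succ (j k : ℕ) (s : ℂ) : F (j+1) k s = (s + k + 1) * F j k (s+1) := by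
  have hsplit : F (j+1) k s =
      ∑ i ∈ range (j+1),
        ((j+1).choose (i+1) : ℂ) * (k.choose (i+1) : ℂ) * ((i+1).factorial : ℂ)
          * rG (s + (i+1 : ℕ) + 1) + rG (s + 1) := by
    rw [F, Finset.sum_range_succ']
    norm_num
  have hB : ∑ i ∈ range (j+1),
      (j.choose (i+1) : ℂ) * (k.choose (i+1) : ℂ) * ((i+1).factorial : ℂ) * rG (s + (i+1:ℕ) + 1)
      + rG (s+1) = F j k s := by
    conv_rhs => rw [F, Finset.sum_range_succ']
    rw [Finset.sum_range_succ, Nat.choose_succ_self]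
    norm_num
  have hA : ∑ i ∈ range (j+1),
      (j.choose i : ℂ) * (k.choose (i+1) : ℂ) * ((i+1).factorial : ℂ) * rG (s + (i+1:ℕ) + 1)
      = (s + k + 1) * F j k (s+1) - F j k s := by
    have congr1 : ∀ i ∈ range (j+1),
        (j.choose i : ℂ) * (k.choose (i+1) : ℂ) * ((i+1).factorial : ℂ) * rG (s + (i+1:ℕ) + 1)
        = (s + k + 1) * ((j.choose i : ℂ) * (k.choose i : ℂ) * (i.factorial : ℂ)
            * rG ((s+1) + i + 1))
          - (j.choose i : ℂ) * (k.choose i : ℂ) * (i.factorial : ℂ) * rG (s + i + 1) := by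
      intro i _
      have h2 : rG (s + i + 1) = (s + i + 1) * rG (s + (i+1:ℕ) + 1) := by
        rw [rG_rec (s + i + 1)]; push_cast; ring_nf
      have h3 : rG ((s+1) + i + 1) = rG (s + (i+1:ℕ) + 1) := by push_cast; ring_nf
      rw [h3, h2]
      linear_combination (rG (s + ((i+1:ℕ):ℂ) + 1)) * (j.choose i : ℂ) * (chooseCast k i)
    rw [Finset.sum_congr rfl congr1, Finset.sum_sub_distrib, ← Finset.mul_sum]
    rw [F, F]
  have pascal : ∀ i ∈ range (j+1),
      ((j+1).choose (i+1) : ℂ) * (k.choose (i+1) : ℂ) * ((i+1).factorial : ℂ)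
          * rG (s + (i+1 : ℕ) + 1)
      = (j.choose (i+1) : ℂ) * (k.choose (i+1) : ℂ) * ((i+1).factorial : ℂ)
          * rG (s + (i+1:ℕ) + 1)
        + (j.choose i : ℂ) * (k.choose (i+1) : ℂ) * ((i+1).factorial : ℂ)
          * rG (s + (i+1:ℕ) + 1) := by
    intro i _
    rw [Nat.choose_succ_succ]
    push_cast
    ring
  calc F (j+1) k s
      = ∑ i ∈ range (j+1),
        ((j+1).choose (i+1) : ℂ) * (k.choose (i+1) : ℂ) * ((i+1).factorial : ℂ)
          * rG (s + (i+1 : ℕ) + 1) + rG (s + 1) := hsplit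
    _ = (∑ i ∈ range (j+1),
          (j.choose (i+1) : ℂ) * (k.choose (i+1) : ℂ) * ((i+1).factorial : ℂ)
            * rG (s + (i+1:ℕ) + 1) + rG (s+1))
        + ∑ i ∈ range (j+1),
          (j.choose i : ℂ) * (k.choose (i+1) : ℂ) * ((i+1).factorial : ℂ)
            * rG (s + (i+1:ℕ) + 1) := by
        rw [Finset.sum_congr rfl pascal, Finset.sum_add_distrib]
        ring
    _ = F j k s + ((s + k + 1) * F j k (s+1) - F j k s) := by rw [hB, hA]
    _ = (s + k + 1) * F j k (s+1) := by ring

lemma van (k j : ℕ) (s : ℂ) :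
    F j k s * rG (s + j + k + 1) = rG (s + j + 1) * rG (s + k + 1) := by
  induction j generalizing s with
  | zero =>
    have h0 : F 0 k s = rG (s + 1) := by
      rw [F]; norm_num
    rw [h0]
    norm_num
  | succ j ih =>
    have harg : s + ((j:ℂ)+1) + k + 1 = (s+1) + j + k + 1 := by ring
    rw [F_succ j k s]
    push_cast
    rw [mul_assoc, harg, ih (s+1)]
    have h1 : rG (s + k + 1) = (s + k + 1) * rG ((s+1) + k + 1) := by
      rw [rG_rec (s + k + 1)]; ring_nf
    have h2 : rG (s + ((j:ℂ)+1) + 1) = rG ((s+1) + j + 1) := by ring_nf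
    rw [h1, h2]
    ring

lemma van' (j k : ℕ) (s : ℂ) :
    (j.factorial : ℂ)⁻¹ * (k.factorial : ℂ)⁻¹ * rG (s + j + 1) * rG (s + k + 1)
    = ∑ n ∈ range (min j k + 1),
        (n.factorial : ℂ)⁻¹ * ((j-n).factorial : ℂ)⁻¹ * ((k-n).factorial : ℂ)⁻¹
          * rG (s + n + 1) * rG (s + j + k + 1) := by
  have key := van k j s
  rw [F] at key
  calc (j.factorial : ℂ)⁻¹ * (k.factorial : ℂ)⁻¹ * rG (s + j + 1) * rG (s + k + 1)
      = (j.factorial : ℂ)⁻¹ * (k.factorial : ℂ)⁻¹ * (rG (s + j + 1) * rG (s + k + 1)) := by ring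
    _ = (j.factorial : ℂ)⁻¹ * (k.factorial : ℂ)⁻¹ *
        ((∑ n ∈ range (j+1), (j.choose n : ℂ) * (k.choose n : ℂ) * (n.factorial : ℂ)
          * rG (s + n + 1)) * rG (s + j + k + 1)) := by rw [key]
    _ = ∑ n ∈ range (j+1), (j.factorial : ℂ)⁻¹ * (k.factorial : ℂ)⁻¹ * (j.choose n : ℂ)
          * (k.choose n : ℂ) * (n.factorial : ℂ) * rG (s + n + 1) * rG (s + j + k + 1) := by
        rw [Finset.sum_mul, Finset.mul_sum]
        exact Finset.sum_congr rfl fun n _ => by ring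
    _ = ∑ n ∈ range (min j k + 1), (j.factorial : ℂ)⁻¹ * (k.factorial : ℂ)⁻¹ * (j.choose n : ℂ)
          * (k.choose n : ℂ) * (n.factorial : ℂ) * rG (s + n + 1) * rG (s + j + k + 1) := by
        symm
        apply Finset.sum_subset
        · intro n hn; simp only [Finset.mem_range] at *; omega
        · intro n hn hn'
          simp only [Finset.mem_range] at hn hn'
          have : k < n := by omega
          rw [Nat.choose_eq_zero_of_lt this]
          simp
    _ = ∑ n ∈ range (min j k + 1),
        (n.factorial : ℂ)⁻¹ * ((j-n).factorial : ℂ)⁻¹ * ((k-n).factorial : ℂ)⁻¹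
          * rG (s + n + 1) * rG (s + j + k + 1) := by
        refine Finset.sum_congr rfl fun n hn => ?_
        simp only [Finset.mem_range] at hn
        have hnj : n ≤ j := by omega
        have hnk : n ≤ k := by omega
        have e1 : (j.choose n : ℂ) * (n.factorial : ℂ) * ((j-n).factorial : ℂ)
            = (j.factorial : ℂ) := by
          exact_mod_cast Nat.choose_mul_factorial_mul_factorial hnj
        have e2 : (k.choose n : ℂ) * (n.factorial : ℂ) * ((k-n).factorial : ℂ)
            = (k.factorial : ℂ) := by
          exact_mod_cast Nat.choose_mul_factorial_mul_factorial hnk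
        have g1 : (n.factorial : ℂ) ≠ 0 := Nat.cast_ne_zero.mpr n.factorial_ne_zero
        have g2 : ((j-n).factorial : ℂ) ≠ 0 := Nat.cast_ne_zero.mpr (j-n).factorial_ne_zero
        have g3 : ((k-n).factorial : ℂ) ≠ 0 := Nat.cast_ne_zero.mpr (k-n).factorial_ne_zero
        have g4 : (j.factorial : ℂ) ≠ 0 := Nat.cast_ne_zero.mpr j.factorial_ne_zero
        have g5 : (k.factorial : ℂ) ≠ 0 := Nat.cast_ne_zero.mpr k.factorial_ne_zero
        field_simp
        linear_combination (rG (s + n + 1) * rG (s + j + k + 1) * (k.choose n : ℂ)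
          * (n.factorial : ℂ) * ((k-n).factorial : ℂ)) * e1
          + (rG (s + n + 1) * rG (s + j + k + 1) * (j.factorial:ℂ)) * e2

lemma expSum (m : ℕ) (p q : ℂ) :
    ∑ il ∈ Finset.HasAntidiagonal.antidiagonal m,
        p ^ il.1 * q ^ il.2 * ((il.1.factorial : ℂ))⁻¹ * ((il.2.factorial : ℂ))⁻¹
      = (p + q) ^ m * ((m.factorial : ℂ))⁻¹ := by
  rw [Commute.add_pow' (Commute.all p q) m, Finset.sum_mul]
  refine Finset.sum_congr rfl fun il hil => ?_
  have h : il.1 + il.2 = m := Finset.HasAntidiagonal.mem_antidiagonal.mp hil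
  have e : (m.choose il.1 : ℂ) * (il.1.factorial : ℂ) * (il.2.factorial : ℂ)
      = (m.factorial : ℂ) := by
    rw [← h, Nat.choose_symm_add]
    exact_mod_cast Nat.add_choose_mul_factorial_mul_factorial il.1 il.2
  have g1 : (il.1.factorial : ℂ) ≠ 0 := Nat.cast_ne_zero.mpr il.1.factorial_ne_zero
  have g2 : (il.2.factorial : ℂ) ≠ 0 := Nat.cast_ne_zero.mpr il.2.factorial_ne_zero
  have g3 : (m.factorial : ℂ) ≠ 0 := Nat.cast_ne_zero.mpr m.factorial_ne_zero
  rw [nsmul_eq_mul]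
  field_simp
  linear_combination (-(p ^ il.1 * q ^ il.2)) * e

lemma cpow_split (z : ℂ) (hz : z ≠ 0) (σ : ℂ) (k : ℕ) :
    z ^ (σ + 2 * (k : ℂ)) = z ^ σ * (z ^ 2) ^ k := by
  rw [show (2 * (k : ℂ)) = ((2 * k : ℕ) : ℂ) by push_cast; ring,
    Complex.cpow_add _ _ hz, Complex.cpow_natCast, pow_mul]

lemma cpow_mul_conj (z : ℂ) (hz : z ≠ 0) (harg : z.arg ≠ Real.pi) (s : ℂ) :
    z ^ s * ((starRingEnd ℂ) z) ^ s = ((Complex.normSq z : ℝ) : ℂ) ^ s := by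
  have hz' : (starRingEnd ℂ) z ≠ 0 := by simpa using hz
  have hn0 : Complex.normSq z ≠ 0 := by simpa using hz
  have hn0' : ((Complex.normSq z : ℝ) : ℂ) ≠ 0 := by exact_mod_cast hn0
  rw [Complex.cpow_def_of_ne_zero hz, Complex.cpow_def_of_ne_zero hz',
    Complex.cpow_def_of_ne_zero hn0', ← Complex.exp_add, ← add_mul]
  congr 2
  rw [Complex.log_conj _ harg, Complex.add_conj]
  have h1 : (Complex.log z).re = Real.log ‖z‖ := Complex.log_re z
  rw [h1]
  have h2 : 2 * Real.log ‖z‖ = Real.log (Complex.normSq z) := by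
    rw [← Complex.sq_norm, Real.log_pow]
    push_cast; ring
  rw [h2, Complex.ofReal_log (Complex.normSq_nonneg z)]

noncomputable def genB (ε s z : ℂ) : ℂ :=
  ∑' k : ℕ, ε ^ k * (z / 2) ^ (s + 2 * (k : ℂ)) /
    ((k.factorial : ℂ) * Complex.Gamma (s + (k : ℂ) + 1))

lemma genMain (ε : ℂ) (hε : ε ^ 2 = 1) (A : ℂ) (hA : ¬(A.im = 0 ∧ A.re ≤ 0))
    (hA2 : (A ^ 2).re = 1 / 2) (x : ℝ) (hx : 0 < x) (s : ℂ)
    (rG_bound : ∀ z : ℂ, ∃ M : ℝ, 0 ≤ M ∧ ∀ n : ℕ, ‖rG (z + n + 1)‖ ≤ M)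
    (van' : ∀ (j k : ℕ) (s : ℂ),
      (j.factorial : ℂ)⁻¹ * (k.factorial : ℂ)⁻¹ * rG (s + j + 1) * rG (s + k + 1)
      = ∑ n ∈ range (min j k + 1),
          (n.factorial : ℂ)⁻¹ * ((j-n).factorial : ℂ)⁻¹ * ((k-n).factorial : ℂ)⁻¹
            * rG (s + n + 1) * rG (s + j + k + 1))
    (expSum : ∀ (m : ℕ) (p q : ℂ),
      ∑ il ∈ Finset.HasAntidiagonal.antidiagonal m,
          p ^ il.1 * q ^ il.2 * ((il.1.factorial : ℂ))⁻¹ * ((il.2.factorial : ℂ))⁻¹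
        = (p + q) ^ m * ((m.factorial : ℂ))⁻¹)
    (cpow_split : ∀ (z : ℂ), z ≠ 0 → ∀ (σ : ℂ) (k : ℕ),
      z ^ (σ + 2 * (k : ℂ)) = z ^ σ * (z ^ 2) ^ k)
    (cpow_mul_conj : ∀ (z : ℂ), z ≠ 0 → z.arg ≠ Real.pi → ∀ s : ℂ,
      z ^ s * ((starRingEnd ℂ) z) ^ s = ((Complex.normSq z : ℝ) : ℂ) ^ s) :
    (Summable fun n : ℕ =>
      ‖(((x * ‖A‖ ^ 2 / 2 : ℝ) : ℂ)) ^ (s + 2 * (n : ℂ)) /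
          ((n.factorial : ℂ) * Complex.Gamma (s + (n : ℂ) + 1)) *
        genB ε (s + 2 * (n : ℂ)) (x : ℂ)‖) ∧
    genB ε s (A * (x : ℂ)) * genB ε s ((starRingEnd ℂ) A * (x : ℂ)) =
      ∑' n : ℕ, (((x * ‖A‖ ^ 2 / 2 : ℝ) : ℂ)) ^ (s + 2 * (n : ℂ)) /
          ((n.factorial : ℂ) * Complex.Gamma (s + (n : ℂ) + 1)) *
        genB ε (s + 2 * (n : ℂ)) (x : ℂ) := by
  ------------------------------------------------------------------ basic setup
  have hε1 : ‖ε‖ = 1 := by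
    have h := congrArg norm hε
    rw [norm_pow, norm_one] at h
    nlinarith [norm_nonneg ε]
  have hA0 : A ≠ 0 := by
    intro h; exact hA (by simp [h])
  have habsA : 0 < ‖A‖ := norm_pos_iff.mpr hA0
  have hx0 : (x : ℂ) ≠ 0 := by exact_mod_cast hx.ne'
  have hz1 : A * (x : ℂ) / 2 ≠ 0 := div_ne_zero (mul_ne_zero hA0 hx0) two_ne_zero
  have hz2conj : (starRingEnd ℂ) A * (x : ℂ) / 2 = (starRingEnd ℂ) (A * (x : ℂ) / 2) := by
    rw [map_div₀, map_mul, Complex.conj_ofReal, map_ofNat]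
  have hz2 : (starRingEnd ℂ) A * (x : ℂ) / 2 ≠ 0 := by
    rw [hz2conj]; simpa using hz1
  have hCpos : 0 < x * ‖A‖ ^ 2 / 2 := by positivity
  have hC0 : ((x * ‖A‖ ^ 2 / 2 : ℝ) : ℂ) ≠ 0 := by exact_mod_cast hCpos.ne'
  have hw0 : (x : ℂ) / 2 ≠ 0 := div_ne_zero hx0 two_ne_zero
  set z1 : ℂ := A * (x : ℂ) / 2 with hz1def
  set z2 : ℂ := (starRingEnd ℂ) A * (x : ℂ) / 2 with hz2def
  set Cc : ℂ := ((x * ‖A‖ ^ 2 / 2 : ℝ) : ℂ) with hCdef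
  set w : ℂ := (x : ℂ) / 2 with hwdef
  set p : ℂ := z1 ^ 2 with hpdef
  set q : ℂ := z2 ^ 2 with hqdef
  have hAc : A * (starRingEnd ℂ) A = ((‖A‖ ^ 2 : ℝ) : ℂ) := by
    rw [Complex.mul_conj]
    norm_cast
    exact (Complex.sq_norm A).symm
  have hAc2 : A * (starRingEnd ℂ) A = ((‖A‖ : ℝ) : ℂ) ^ 2 := by
    rw [hAc]; push_cast; ring
  have hA21 : A ^ 2 + ((starRingEnd ℂ) A) ^ 2 = 1 := by
    have h1 : A ^ 2 + (starRingEnd ℂ) (A ^ 2) = ((2 * (A ^ 2).re : ℝ) : ℂ) :=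
      Complex.add_conj (A ^ 2)
    rw [map_pow] at h1
    rw [h1, hA2]
    norm_num
  have hpq : p + q = w ^ 2 := by
    rw [hpdef, hqdef, hwdef, hz1def, hz2def]
    field_simp
    linear_combination hA21
  have hCx : Cc * w = z1 * z2 := by
    rw [hCdef, hwdef, hz1def, hz2def]
    push_cast
    field_simp
    linear_combination hAc2.symm
  have hB2 : Cc ^ 2 * w ^ 2 = p * q := by
    rw [hpdef, hqdef]
    linear_combination (Cc * w + z1 * z2) * hCx
  have hargz1 : z1.arg ≠ Real.pi := by
    have h1 : z1 = ((x / 2 : ℝ) : ℂ) * A := by rw [hz1def]; push_cast; ring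
    rw [h1, Complex.arg_real_mul A (by positivity : (0:ℝ) < x / 2)]
    intro h
    rw [Complex.arg_eq_pi_iff] at h
    exact hA ⟨h.2, h.1.le⟩
  have hnormSq : Complex.normSq z1 = (x * ‖A‖ ^ 2 / 2) * (x / 2) := by
    have habs : ‖z1‖ = ‖A‖ * x / 2 := by
      rw [hz1def, norm_div, norm_mul, Complex.norm_real, Real.norm_eq_abs, _root_.abs_of_pos hx]
      norm_num
    rw [← Complex.sq_norm, habs]
    ring
  have hE : z1 ^ s * z2 ^ s = Cc ^ s * w ^ s := by
    rw [hz2conj]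
    rw [cpow_mul_conj z1 hz1 hargz1 s, hnormSq]
    have hw : w = (((x / 2 : ℝ)) : ℂ) := by rw [hwdef]; push_cast; ring
    rw [hw, hCdef, ← Complex.mul_cpow_ofReal_nonneg hCpos.le (by positivity : (0:ℝ) ≤ x / 2)]
    norm_cast
  ------------------------------------------------------------------ reciprocal Gamma bound
  obtain ⟨M, hM0, hM⟩ := rG_bound s
  ------------------------------------------------------------------ term functions
  set tu : ℕ → ℂ := fun j => ε ^ j * (A * (x : ℂ) / 2) ^ (s + 2 * (j : ℂ)) /
    ((j.factorial : ℂ) * Complex.Gamma (s + (j : ℂ) + 1)) with htudef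
  set tv : ℕ → ℂ := fun j => ε ^ j * ((starRingEnd ℂ) A * (x : ℂ) / 2) ^ (s + 2 * (j : ℂ)) /
    ((j.factorial : ℂ) * Complex.Gamma (s + (j : ℂ) + 1)) with htvdef
  have htu : ∀ j : ℕ, tu j = z1 ^ s * (ε ^ j * p ^ j * ((j.factorial : ℂ))⁻¹
      * rG (s + (j : ℂ) + 1)) := by
    intro j
    rw [htudef]
    simp only
    rw [show A * (x : ℂ) / 2 = z1 from rfl, cpow_split z1 hz1 s j, ← hpdef, rG,
      div_eq_mul_inv, mul_inv]
    ring
  have htv : ∀ j : ℕ, tv j = z2 ^ s * (ε ^ j * q ^ j * ((j.factorial : ℂ))⁻¹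
      * rG (s + (j : ℂ) + 1)) := by
    intro j
    rw [htvdef]
    simp only
    rw [show (starRingEnd ℂ) A * (x : ℂ) / 2 = z2 from rfl, cpow_split z2 hz2 s j, ← hqdef, rG,
      div_eq_mul_inv, mul_inv]
    ring
  have hgu : genB ε s (A * (x : ℂ)) = ∑' j : ℕ, tu j := rfl
  have hgv : genB ε s ((starRingEnd ℂ) A * (x : ℂ)) = ∑' k : ℕ, tv k := rfl
  clear_value tu tv
  clear_value z1 z2 Cc w p q
  ------------------------------------------------------------------ basic summability
  have SuGen : ∀ z : ℂ, Summable (fun j : ℕ => ‖z‖ ^ j / (j.factorial : ℝ)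
      * ‖rG (s + (j : ℂ) + 1)‖) := by
    intro z
    apply Summable.of_nonneg_of_le (fun j => by positivity)
      (fun j => ?_) ((Real.summable_pow_div_factorial ‖z‖).mul_right M)
    have h0 : (0:ℝ) ≤ ‖z‖ ^ j / (j.factorial : ℝ) := by positivity
    exact mul_le_mul_of_nonneg_left (hM j) h0
  have normEq : ∀ (c z : ℂ) (j : ℕ), ‖c * (ε ^ j * z ^ j * ((j.factorial : ℂ))⁻¹
      * rG (s + (j : ℂ) + 1))‖ = ‖c‖ * (‖z‖ ^ j / (j.factorial : ℝ) * ‖rG (s + (j:ℂ) + 1)‖) := by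
    intro c z j
    rw [norm_mul, norm_mul, norm_mul, norm_mul, norm_pow, norm_pow, hε1, one_pow,
      norm_inv, Complex.norm_natCast]
    ring
  have Su : Summable (fun j => ‖tu j‖) := by
    apply Summable.congr (((SuGen p).mul_left ‖z1 ^ s‖))
    intro j
    rw [htu j, normEq]
  have Sv : Summable (fun j => ‖tv j‖) := by
    apply Summable.congr (((SuGen q).mul_left ‖z2 ^ s‖))
    intro j
    rw [htv j, normEq]
  ------------------------------------------------------------------ the master triple family
  set E : ℂ := z1 ^ s * z2 ^ s with hEdef
  clear_value E
  set h : ℕ × ℕ × ℕ → ℂ := fun t => E * (ε ^ (t.2.1 + t.2.2) * (p * q) ^ t.1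
      * p ^ t.2.1 * q ^ t.2.2
      * ((t.1.factorial : ℂ))⁻¹ * ((t.2.1.factorial : ℂ))⁻¹ * ((t.2.2.factorial : ℂ))⁻¹
      * rG (s + t.1 + 1) * rG (s + 2 * t.1 + t.2.1 + t.2.2 + 1)) with hhdef
  clear_value h
  have hnormh : ∀ t : ℕ × ℕ × ℕ, ‖h t‖ =
      ‖E‖ * ((‖p * q‖ ^ t.1 / (t.1.factorial : ℝ) * ‖rG (s + t.1 + 1)‖)
        * ((‖p‖ ^ t.2.1 / (t.2.1.factorial : ℝ)) * (‖q‖ ^ t.2.2 / (t.2.2.factorial : ℝ))))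
      * ‖rG (s + 2 * t.1 + t.2.1 + t.2.2 + 1)‖ := by
    intro t
    rw [hhdef]
    simp only [norm_mul, norm_pow, norm_inv, Complex.norm_natCast, hε1, one_pow]
    ring
  have hMt : ∀ t : ℕ × ℕ × ℕ, ‖rG (s + 2 * (t.1 : ℂ) + t.2.1 + t.2.2 + 1)‖ ≤ M := by
    intro t
    have e : s + 2 * (t.1 : ℂ) + t.2.1 + t.2.2 + 1
        = s + ((2 * t.1 + t.2.1 + t.2.2 : ℕ) : ℂ) + 1 := by push_cast; ring
    rw [e]
    exact hM _
  have Sprod : Summable (fun t : ℕ × ℕ × ℕ =>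
      (‖E‖ * M) * ((‖p * q‖ ^ t.1 / (t.1.factorial : ℝ) * ‖rG (s + t.1 + 1)‖)
        * ((‖p‖ ^ t.2.1 / (t.2.1.factorial : ℝ)) * (‖q‖ ^ t.2.2 / (t.2.2.factorial : ℝ))))) := by
    have Sg : Summable (fun il : ℕ × ℕ =>
        (‖p‖ ^ il.1 / (il.1.factorial : ℝ)) * (‖q‖ ^ il.2 / (il.2.factorial : ℝ))) := by
      apply Summable.mul_of_nonneg (Real.summable_pow_div_factorial ‖p‖)
        (Real.summable_pow_div_factorial ‖q‖) <;> intro i <;> positivity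
    have Sfg : Summable (fun t : ℕ × (ℕ × ℕ) =>
        (‖p * q‖ ^ t.1 / (t.1.factorial : ℝ) * ‖rG (s + t.1 + 1)‖)
        * ((‖p‖ ^ t.2.1 / (t.2.1.factorial : ℝ)) * (‖q‖ ^ t.2.2 / (t.2.2.factorial : ℝ)))) := by
      apply Summable.mul_of_nonneg (SuGen (p * q)) Sg
      · intro i; positivity
      · intro il; positivity
    exact Sfg.mul_left _
  have Hh : Summable (fun t : ℕ × ℕ × ℕ => ‖h t‖) := by
    apply Summable.of_nonneg_of_le (fun t => norm_nonneg _) (fun t => ?_) Sprod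
    rw [hnormh t]
    have base : (0:ℝ) ≤ ‖E‖ * ((‖p * q‖ ^ t.1 / (t.1.factorial : ℝ) * ‖rG (s + t.1 + 1)‖)
        * ((‖p‖ ^ t.2.1 / (t.2.1.factorial : ℝ)) * (‖q‖ ^ t.2.2 / (t.2.2.factorial : ℝ)))) := by
      positivity
    calc ‖E‖ * ((‖p * q‖ ^ t.1 / (t.1.factorial : ℝ) * ‖rG (s + t.1 + 1)‖)
        * ((‖p‖ ^ t.2.1 / (t.2.1.factorial : ℝ)) * (‖q‖ ^ t.2.2 / (t.2.2.factorial : ℝ))))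
        * ‖rG (s + 2 * t.1 + t.2.1 + t.2.2 + 1)‖
        ≤ ‖E‖ * ((‖p * q‖ ^ t.1 / (t.1.factorial : ℝ) * ‖rG (s + t.1 + 1)‖)
        * ((‖p‖ ^ t.2.1 / (t.2.1.factorial : ℝ)) * (‖q‖ ^ t.2.2 / (t.2.2.factorial : ℝ)))) * M :=
          mul_le_mul_of_nonneg_left (hMt t) base
      _ = (‖E‖ * M) * ((‖p * q‖ ^ t.1 / (t.1.factorial : ℝ) * ‖rG (s + t.1 + 1)‖)
        * ((‖p‖ ^ t.2.1 / (t.2.1.factorial : ℝ)) * (‖q‖ ^ t.2.2 / (t.2.2.factorial : ℝ)))) := by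
          ring
  have Hh' : Summable h := Hh.of_norm
  ------------------------------------------------------------------ per-(j,k): Vandermonde
  have step1 : ∀ jk : ℕ × ℕ, tu jk.1 * tv jk.2
      = ∑ n ∈ range (min jk.1 jk.2 + 1), h (n, jk.1 - n, jk.2 - n) := by
    rintro ⟨j, k⟩
    simp only
    rw [htu j, htv k]
    calc z1 ^ s * (ε ^ j * p ^ j * ((j.factorial : ℂ))⁻¹ * rG (s + (j:ℂ) + 1))
        * (z2 ^ s * (ε ^ k * q ^ k * ((k.factorial : ℂ))⁻¹ * rG (s + (k:ℂ) + 1)))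
        = (E * (ε ^ (j + k) * p ^ j * q ^ k))
          * ((j.factorial : ℂ)⁻¹ * (k.factorial : ℂ)⁻¹ * rG (s + j + 1) * rG (s + k + 1)) := by
          rw [hEdef, pow_add]; ring
      _ = (E * (ε ^ (j + k) * p ^ j * q ^ k))
          * (∑ n ∈ range (min j k + 1),
            (n.factorial : ℂ)⁻¹ * ((j-n).factorial : ℂ)⁻¹ * ((k-n).factorial : ℂ)⁻¹
              * rG (s + n + 1) * rG (s + j + k + 1)) := by rw [van' j k s]
      _ = ∑ n ∈ range (min j k + 1), (E * (ε ^ (j + k) * p ^ j * q ^ k))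
          * ((n.factorial : ℂ)⁻¹ * ((j-n).factorial : ℂ)⁻¹ * ((k-n).factorial : ℂ)⁻¹
              * rG (s + n + 1) * rG (s + j + k + 1)) := Finset.mul_sum _ _ _
      _ = ∑ n ∈ range (min j k + 1), h (n, j - n, k - n) := by
          refine Finset.sum_congr rfl fun n hn => ?_
          simp only [Finset.mem_range] at hn
          have hnj : n ≤ j := by omega
          have hnk : n ≤ k := by omega
          have hεe : ε ^ (j + k) = ε ^ ((j - n) + (k - n)) := by
            have e1 : (ε ^ 2) ^ n * ε ^ ((j - n) + (k - n)) = ε ^ (j + k) := by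
              rw [← pow_mul, ← pow_add]
              congr 1
              omega
            rw [← e1, hε, one_pow, one_mul]
          have hpow : (p * q) ^ n * p ^ (j - n) * q ^ (k - n) = p ^ j * q ^ k := by
            calc (p * q) ^ n * p ^ (j - n) * q ^ (k - n)
                = (p ^ n * p ^ (j - n))  * (q ^ n * q ^ (k - n)) := by rw [mul_pow]; ring
              _ = p ^ j * q ^ k := by
                  rw [← pow_add, ← pow_add, show n + (j - n) = j by omega,
                    show n + (k - n) = k by omega]
          have harg : s + 2 * (n : ℂ) + ((j - n : ℕ) : ℂ) + ((k - n : ℕ) : ℂ) + 1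
              = s + j + k + 1 := by
            push_cast [Nat.cast_sub hnj, Nat.cast_sub hnk]
            ring
          rw [hhdef]
          simp only
          rw [harg, hεe]
          linear_combination (-(E * ε ^ ((j - n) + (k - n))) * ((n.factorial : ℂ))⁻¹
            * (((j-n).factorial : ℂ))⁻¹ * (((k-n).factorial : ℂ))⁻¹
            * rG (s + n + 1) * rG (s + j + k + 1)) * hpow
  ------------------------------------------------------------------ indicator family
  set hInd : (ℕ × ℕ) × ℕ → ℂ := fun t =>
    if t.2 ≤ t.1.1 ∧ t.2 ≤ t.1.2 then h (t.2, t.1.1 - t.2, t.1.2 - t.2) else 0 with hInddef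
  clear_value hInd
  have step2 : ∀ jk : ℕ × ℕ, (∑ n ∈ range (min jk.1 jk.2 + 1), h (n, jk.1 - n, jk.2 - n))
      = ∑' n : ℕ, hInd (jk, n) := by
    rintro ⟨j, k⟩
    simp only
    symm
    rw [tsum_eq_sum (s := range (min j k + 1)) ?_]
    · refine Finset.sum_congr rfl fun n hn => ?_
      simp only [Finset.mem_range] at hn
      rw [hInddef]
      simp only
      rw [if_pos ⟨by omega, by omega⟩]
    · intro n hn
      simp only [Finset.mem_range] at hn
      rw [hInddef]
      simp only
      rw [if_neg (by omega)]
  set φ : ℕ × ℕ × ℕ → (ℕ × ℕ) × ℕ := fun t => ((t.1 + t.2.1, t.1 + t.2.2), t.1) with hφdef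
  clear_value φ
  have hφinj : Function.Injective φ := by
    rintro ⟨a, b, c⟩ ⟨a', b', c'⟩ he
    simp only [hφdef, Prod.mk.injEq] at he
    obtain ⟨⟨h1, h2⟩, h3⟩ := he
    exact Prod.ext h3 (Prod.ext (show b = b' by omega) (show c = c' by omega))
  have hcomp : ∀ t : ℕ × ℕ × ℕ, hInd (φ t) = h t := by
    rintro ⟨n, i, l⟩
    simp only [hφdef, hInddef]
    rw [if_pos ⟨Nat.le_add_right n i, Nat.le_add_right n l⟩]
    simp only [Nat.add_sub_cancel_left]
  have hsupp : Function.support hInd ⊆ Set.range φ := by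
    intro t ht
    rw [Function.mem_support] at ht
    by_cases hc : t.2 ≤ t.1.1 ∧ t.2 ≤ t.1.2
    · refine ⟨(t.2, t.1.1 - t.2, t.1.2 - t.2), ?_⟩
      rw [hφdef]
      simp only
      have e1 : t.2 + (t.1.1 - t.2) = t.1.1 := by omega
      have e2 : t.2 + (t.1.2 - t.2) = t.1.2 := by omega
      rw [e1, e2]
    · exfalso
      apply ht
      rw [hInddef]
      simp only
      rw [if_neg hc]
  have SInd : Summable hInd := by
    refine (Function.Injective.summable_iff hφinj ?_).mp ?_
    · intro t ht
      by_contra hne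
      exact ht (hsupp hne)
    · exact Summable.congr Hh' fun t => (hcomp t).symm
  have EInd : ∑' t : (ℕ × ℕ) × ℕ, hInd t = ∑' t : ℕ × ℕ × ℕ, h t := by
    rw [← Function.Injective.tsum_eq hφinj hsupp]
    exact tsum_congr hcomp
  ------------------------------------------------------------------ per-n regrouping
  have stepE : ∀ n : ℕ, (∑' il : ℕ × ℕ, h (n, il))
      = Cc ^ (s + 2 * (n : ℂ)) /
          ((n.factorial : ℂ) * Complex.Gamma (s + (n : ℂ) + 1)) *
        genB ε (s + 2 * (n : ℂ)) (x : ℂ) := by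
    intro n
    have hsum_il : Summable (fun il : ℕ × ℕ => h (n, il)) := Hh'.prod_factor n
    have finStep : ∀ m : ℕ, (∑ il ∈ Finset.HasAntidiagonal.antidiagonal m, h (n, il))
        = Cc ^ (s + 2 * (n : ℂ)) /
            ((n.factorial : ℂ) * Complex.Gamma (s + (n : ℂ) + 1)) *
          (ε ^ m * ((x : ℂ) / 2) ^ ((s + 2 * (n : ℂ)) + 2 * (m : ℂ)) /
            ((m.factorial : ℂ) * Complex.Gamma ((s + 2 * (n : ℂ)) + (m : ℂ) + 1))) := by
      intro m
      have lhs_eq : (∑ il ∈ Finset.HasAntidiagonal.antidiagonal m, h (n, il))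
          = (E * (p * q) ^ n * ((n.factorial : ℂ))⁻¹ * rG (s + n + 1) * ε ^ m
              * rG (s + 2 * n + m + 1)) * ((p + q) ^ m * ((m.factorial : ℂ))⁻¹) := by
        rw [← expSum m p q, Finset.mul_sum]
        refine Finset.sum_congr rfl fun il hil => ?_
        have hm : il.1 + il.2 = m := Finset.HasAntidiagonal.mem_antidiagonal.mp hil
        have hεm : ε ^ (il.1 + il.2) = ε ^ m := by rw [hm]
        have hrg : s + 2 * (n : ℂ) + (il.1 : ℂ) + (il.2 : ℂ) + 1
            = s + 2 * (n : ℂ) + (m : ℂ) + 1 := by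
          rw [← hm]; push_cast; ring
        rw [hhdef]
        simp only
        rw [hrg, hεm]
        ring
      have hr1 : Cc ^ (s + 2 * (n : ℂ)) = Cc ^ s * (Cc ^ 2) ^ n := cpow_split _ hC0 s n
      have hw0' : (x : ℂ) / 2 ≠ 0 := by rw [← hwdef]; exact hw0
      have hr2 : ((x : ℂ) / 2) ^ ((s + 2 * (n : ℂ)) + 2 * (m : ℂ))
          = ((x : ℂ) / 2) ^ (s + 2 * (n : ℂ)) * (((x : ℂ) / 2) ^ 2) ^ m :=
        cpow_split _ hw0' _ m
      have hr4 : ((x : ℂ) / 2) ^ (s + 2 * (n : ℂ))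
          = ((x : ℂ) / 2) ^ s * (((x : ℂ) / 2) ^ 2) ^ n := cpow_split _ hw0' s n
      have hppq : (Cc ^ 2) ^ n * (((x : ℂ) / 2) ^ 2) ^ n = (p * q) ^ n := by
        rw [← mul_pow, ← hwdef, hB2]
      have hwq : (((x : ℂ) / 2) ^ 2) ^ m = (p + q) ^ m := by
        rw [← hwdef, hpq]
      rw [lhs_eq, hr1, hr2, hr4, hE, ← hppq, ← hwq, hwdef]
      simp only [rG]
      ring
    calc (∑' il : ℕ × ℕ, h (n, il))
        = ∑' σ : (Σ m : ℕ, Finset.HasAntidiagonal.antidiagonal m),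
            h (n, (Finset.HasAntidiagonal.sigmaAntidiagonalEquivProd σ)) :=
          (Equiv.tsum_eq Finset.HasAntidiagonal.sigmaAntidiagonalEquivProd fun il => h (n, il)).symm
      _ = ∑' m : ℕ, ∑ il ∈ Finset.HasAntidiagonal.antidiagonal m, h (n, il) := by
          have hσ : Summable (fun σ : (Σ m : ℕ, (Finset.HasAntidiagonal.antidiagonal m : Finset (ℕ × ℕ))) =>
              h (n, Finset.HasAntidiagonal.sigmaAntidiagonalEquivProd σ)) := by
            apply Summable.congr (Finset.HasAntidiagonal.sigmaAntidiagonalEquivProd.summable_iff.mpr hsum_il)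
            intro σ
            rfl
          rw [Summable.tsum_sigma hσ]
          refine tsum_congr fun m => ?_
          exact Finset.tsum_subtype (Finset.HasAntidiagonal.antidiagonal m) (fun il => h (n, il))
      _ = ∑' m : ℕ, Cc ^ (s + 2 * (n : ℂ)) /
            ((n.factorial : ℂ) * Complex.Gamma (s + (n : ℂ) + 1)) *
          (ε ^ m * ((x : ℂ) / 2) ^ ((s + 2 * (n : ℂ)) + 2 * (m : ℂ)) /
            ((m.factorial : ℂ) * Complex.Gamma ((s + 2 * (n : ℂ)) + (m : ℂ) + 1))) :=
          tsum_congr finStep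
      _ = Cc ^ (s + 2 * (n : ℂ)) /
            ((n.factorial : ℂ) * Complex.Gamma (s + (n : ℂ) + 1)) *
          ∑' m : ℕ, (ε ^ m * ((x : ℂ) / 2) ^ ((s + 2 * (n : ℂ)) + 2 * (m : ℂ)) /
            ((m.factorial : ℂ) * Complex.Gamma ((s + 2 * (n : ℂ)) + (m : ℂ) + 1))) :=
          tsum_mul_left
      _ = Cc ^ (s + 2 * (n : ℂ)) /
            ((n.factorial : ℂ) * Complex.Gamma (s + (n : ℂ) + 1)) *
          genB ε (s + 2 * (n : ℂ)) (x : ℂ) := rfl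
  ------------------------------------------------------------------ conclusion
  constructor
  · apply Summable.of_nonneg_of_le (fun n => norm_nonneg _) (fun n => ?_)
      ((summable_prod_of_nonneg (fun t : ℕ × (ℕ × ℕ) => norm_nonneg (h t))).mp Hh).2
    rw [← stepE n]
    exact norm_tsum_le_tsum_norm (Hh.prod_factor n)
  · calc genB ε s (A * (x : ℂ)) * genB ε s ((starRingEnd ℂ) A * (x : ℂ))
        = (∑' j : ℕ, tu j) * (∑' k : ℕ, tv k) := by rw [hgu, hgv]
      _ = ∑' jk : ℕ × ℕ, tu jk.1 * tv jk.2 := tsum_mul_tsum_of_summable_norm Su Sv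
      _ = ∑' jk : ℕ × ℕ, ∑' nn : ℕ, hInd (jk, nn) :=
          tsum_congr fun jk => (step1 jk).trans (step2 jk)
      _ = ∑' t : (ℕ × ℕ) × ℕ, hInd t := (Summable.tsum_prod SInd).symm
      _ = ∑' t : ℕ × ℕ × ℕ, h t := EInd
      _ = ∑' n : ℕ, ∑' il : ℕ × ℕ, h (n, il) := Summable.tsum_prod Hh'
      _ = ∑' n : ℕ, Cc ^ (s + 2 * (n : ℂ)) /
            ((n.factorial : ℂ) * Complex.Gamma (s + (n : ℂ) + 1)) *
          genB ε (s + 2 * (n : ℂ)) (x : ℂ) := tsum_congr stepE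



end BesselHelpers

theorem stmt4 (A : ℂ) (hA : ¬(A.im = 0 ∧ A.re ≤ 0)) (hA2 : (A ^ 2).re = 1 / 2)
    (x : ℝ) (hx : 0 < x) (s : ℂ) :
    (Summable fun n : ℕ =>
      ‖(((x * ‖A‖ ^ 2 / 2 : ℝ) : ℂ)) ^ (s + 2 * (n : ℂ)) /
          ((n.factorial : ℂ) * Complex.Gamma (s + (n : ℂ) + 1)) *
        besselJ (s + 2 * (n : ℂ)) (x : ℂ)‖) ∧
    besselJ s (A * (x : ℂ)) * besselJ s ((starRingEnd ℂ) A * (x : ℂ)) =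
      ∑' n : ℕ, (((x * ‖A‖ ^ 2 / 2 : ℝ) : ℂ)) ^ (s + 2 * (n : ℂ)) /
          ((n.factorial : ℂ) * Complex.Gamma (s + (n : ℂ) + 1)) *
        besselJ (s + 2 * (n : ℂ)) (x : ℂ) ∧
    (Summable fun n : ℕ =>
      ‖(((x * ‖A‖ ^ 2 / 2 : ℝ) : ℂ)) ^ (s + 2 * (n : ℂ)) /
          ((n.factorial : ℂ) * Complex.Gamma (s + (n : ℂ) + 1)) *
        besselI (s + 2 * (n : ℂ)) (x : ℂ)‖) ∧
    besselI s (A * (x : ℂ)) * besselI s ((starRingEnd ℂ) A * (x : ℂ)) =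
      ∑' n : ℕ, (((x * ‖A‖ ^ 2 / 2 : ℝ) : ℂ)) ^ (s + 2 * (n : ℂ)) /
          ((n.factorial : ℂ) * Complex.Gamma (s + (n : ℂ) + 1)) *
        besselI (s + 2 * (n : ℂ)) (x : ℂ) := by
  have hJ : ∀ s z : ℂ, besselJ s z = genB (-1) s z := fun s z => rfl
  have hI : ∀ s z : ℂ, besselI s z = genB 1 s z := fun s z =>
    tsum_congr fun k => by rw [one_pow, one_mul]
  obtain ⟨SJ, EJ⟩ := genMain (-1) (by norm_num) A hA hA2 x hx s
    rG_bound van' expSum cpow_split cpow_mul_conj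
  obtain ⟨SI, EI⟩ := genMain 1 (one_pow 2) A hA hA2 x hx s
    rG_bound van' expSum cpow_split cpow_mul_conj
  refine ⟨?_, ?_, ?_, ?_⟩
  · simpa only [hJ] using SJ
  · simpa only [hJ] using EJ
  · simpa only [hI] using SI
  · simpa only [hI] using EI
end

section
/- Let C ⊂ {s ∈ ℂ : Re(s) > −1/2} be a compact set. Then there exists M > 0 such that for all s ∈ C and all z ∈ ℂ ∖ {0}: |𝒥_s(z)| ≤ M |z|^{Re(s)} whenever 0 < |z| ≤ 1, and |𝒥_s(z)| ≤ M e^{8π√|z|} |z|^{Re(s)} whenever |z| > 1. -/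
open scoped Real Topology
open Complex

/-- The function `𝒥_s(z)`, built out of `J_s` (for `Re z ≥ 0`) and `I_s` (for `Re z ≤ 0`),
with the principal branch of the square root. -/
noncomputable def calJ (s z : ℂ) : ℂ :=
  if 0 ≤ z.re then
    besselJ s (4 * (π : ℂ) * z ^ (1 / 2 : ℂ)) *
      besselJ s (4 * (π : ℂ) * ((starRingEnd ℂ) z) ^ (1 / 2 : ℂ))
  else
    besselI s (4 * (π : ℂ) * (-z) ^ (1 / 2 : ℂ)) *
      besselI s (4 * (π : ℂ) * (-((starRingEnd ℂ) z)) ^ (1 / 2 : ℂ))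

lemma gamma_lb {s : ℂ} (hs : -(1/2:ℝ) < s.re) (k : ℕ) :
    ‖Complex.Gamma (s + 1)‖ * (((2*k).factorial : ℝ) / (4^k * k.factorial))
      ≤ ‖Complex.Gamma (s + (k:ℂ) + 1)‖ := by
  induction k with
  | zero => simp
  | succ k ih =>
    have hne : s + (k:ℂ) + 1 ≠ 0 := by
      intro h
      have : (s + (k:ℂ) + 1).re = 0 := by rw [h]; simp
      simp only [Complex.add_re, Complex.natCast_re, Complex.one_re] at this
      have hk : (0:ℝ) ≤ k := Nat.cast_nonneg k
      linarith
    have hG : Complex.Gamma (s + ((k+1 : ℕ):ℂ) + 1)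
        = (s + (k:ℂ) + 1) * Complex.Gamma (s + (k:ℂ) + 1) := by
      have : s + ((k+1 : ℕ):ℂ) + 1 = (s + (k:ℂ) + 1) + 1 := by push_cast; ring
      rw [this, Complex.Gamma_add_one _ hne]
    have habs : (k:ℝ) + 1/2 ≤ ‖s + (k:ℂ) + 1‖ := by
      have h1 : (s + (k:ℂ) + 1).re ≤ ‖s + (k:ℂ) + 1‖ := Complex.re_le_norm _
      simp only [Complex.add_re, Complex.natCast_re, Complex.one_re] at h1
      linarith
    have hfac : (((2*(k+1)).factorial : ℝ) / (4^(k+1) * (k+1).factorial))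
        = (((2*k).factorial : ℝ) / (4^k * k.factorial)) * ((k:ℝ) + 1/2) := by
      have h2 : 2*(k+1) = (2*k) + 1 + 1 := by ring
      rw [h2]
      push_cast [Nat.factorial_succ]
      have h3 : (k.factorial : ℝ) ≠ 0 := Nat.cast_ne_zero.mpr k.factorial_ne_zero
      field_simp
      ring
    rw [hG, hfac]
    have hnn : (0:ℝ) ≤ ‖Complex.Gamma (s+1)‖ * (((2*k).factorial : ℝ) / (4^k * k.factorial)) := by
      positivity
    have hk2 : (0:ℝ) ≤ (k:ℝ) + 1/2 := by positivity
    calc ‖Complex.Gamma (s+1)‖ * ((((2*k).factorial : ℝ) / (4^k * k.factorial)) * ((k:ℝ) + 1/2))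
        = (‖Complex.Gamma (s+1)‖ * (((2*k).factorial : ℝ) / (4^k * k.factorial))) * ((k:ℝ)+1/2) := by
          ring
      _ ≤ ‖Complex.Gamma (s + (k:ℂ) + 1)‖ * ‖s + (k:ℂ) + 1‖ :=
          mul_le_mul ih habs hk2 (norm_nonneg _)
      _ = ‖s + (k:ℂ) + 1‖ * ‖Complex.Gamma (s + (k:ℂ) + 1)‖ := mul_comm _ _
      _ = ‖(s + (k:ℂ) + 1) * Complex.Gamma (s + (k:ℂ) + 1)‖ := (norm_mul _ _).symm

lemma term_bound {s : ℂ} (hs : -(1/2:ℝ) < s.re) {w : ℂ} (hw : w ≠ 0) (k : ℕ) :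
    ‖(w / 2) ^ (s + 2 * (k : ℂ)) / ((k.factorial : ℂ) * Complex.Gamma (s + (k:ℂ) + 1))‖ ≤
      (‖w‖ / 2) ^ s.re * Real.exp (π * |s.im|) / ‖Complex.Gamma (s + 1)‖ *
        ((‖w‖) ^ (2*k) / (2*k).factorial) := by
  have hw2 : w / 2 ≠ 0 := div_ne_zero hw two_ne_zero
  have hB : (0:ℝ) < ‖Complex.Gamma (s + 1)‖ := by
    rw [norm_pos_iff]
    exact Complex.Gamma_ne_zero_of_re_pos (by simp; linarith)
  have hpow : (w / 2) ^ (s + 2 * (k : ℂ)) = (w / 2) ^ s * (w / 2) ^ (2*k) := by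
    rw [Complex.cpow_add _ _ hw2]
    congr 1
    have : (2 * (k:ℂ)) = ((2*k : ℕ) : ℂ) := by push_cast; ring
    rw [this, Complex.cpow_natCast]
  have habs2 : ‖w/2‖ = ‖w‖ / 2 := by
    rw [norm_div]; norm_num
  have hns : ‖(w / 2) ^ s‖ ≤ (‖w‖ / 2) ^ s.re * Real.exp (π * |s.im|) := by
    rw [Complex.norm_cpow_of_ne_zero hw2, div_eq_mul_inv, ← Real.exp_neg]
    rw [habs2]
    refine mul_le_mul_of_nonneg_left ?_ (by positivity)
    apply Real.exp_le_exp.mpr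
    calc -((w/2).arg * s.im) ≤ |(w/2).arg * s.im| := neg_le_abs _
      _ = |(w/2).arg| * |s.im| := abs_mul _ _
      _ ≤ π * |s.im| := mul_le_mul_of_nonneg_right (Complex.abs_arg_le_pi _) (abs_nonneg _)
  have hGk : (0:ℝ) < ‖Complex.Gamma (s + (k:ℂ) + 1)‖ := by
    rw [norm_pos_iff]
    refine Complex.Gamma_ne_zero_of_re_pos ?_
    simp only [Complex.add_re, Complex.natCast_re, Complex.one_re]
    have : (0:ℝ) ≤ (k:ℝ) := Nat.cast_nonneg k
    linarith
  have hkfac : (0:ℝ) < (k.factorial : ℝ) := by positivity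
  have hden : ‖Complex.Gamma (s + 1)‖ * (((2*k).factorial : ℝ) / 4^k)
      ≤ (k.factorial : ℝ) * ‖Complex.Gamma (s + (k:ℂ) + 1)‖ := by
    have h := mul_le_mul_of_nonneg_left (gamma_lb hs k) hkfac.le
    calc ‖Complex.Gamma (s + 1)‖ * (((2*k).factorial : ℝ) / 4^k)
        = (k.factorial : ℝ) *
            (‖Complex.Gamma (s + 1)‖ * (((2*k).factorial : ℝ) / (4^k * k.factorial))) := by
          field_simp
      _ ≤ (k.factorial : ℝ) * ‖Complex.Gamma (s + (k:ℂ) + 1)‖ := h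
  have hnorm : ‖(w / 2) ^ (s + 2 * (k : ℂ)) / ((k.factorial : ℂ) * Complex.Gamma (s + (k:ℂ) + 1))‖
      = ‖(w/2)^s‖ * (‖w‖ / 2)^(2*k) / ((k.factorial : ℝ) * ‖Complex.Gamma (s + (k:ℂ) + 1)‖) := by
    rw [hpow, norm_div, norm_mul, norm_mul, norm_pow]
    simp [habs2, Complex.norm_natCast]
  rw [hnorm]
  have hstep : ‖(w/2)^s‖ * (‖w‖ / 2)^(2*k) /
        ((k.factorial : ℝ) * ‖Complex.Gamma (s + (k:ℂ) + 1)‖)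
      ≤ ((‖w‖ / 2) ^ s.re * Real.exp (π * |s.im|)) * (‖w‖ / 2)^(2*k) /
        (‖Complex.Gamma (s + 1)‖ * (((2*k).factorial : ℝ) / 4^k)) := by
    refine div_le_div₀ (by positivity) ?_ (by positivity) hden
    exact mul_le_mul_of_nonneg_right hns (by positivity)
  refine hstep.trans (le_of_eq ?_)
  have h4 : (4:ℝ)^k = 2^(2*k) := by rw [pow_mul]; norm_num
  have h5 : (‖w‖ / 2)^(2*k) = (‖w‖)^(2*k) / 2^(2*k) := div_pow _ _ _
  have h2k : (0:ℝ) < ((2*k).factorial : ℝ) := by positivity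
  have h2p : (0:ℝ) < (2:ℝ)^(2*k) := by positivity
  rw [h5, h4]
  field_simp

lemma bessel_sum_bound {s : ℂ} (hs : -(1/2:ℝ) < s.re) {w : ℂ} (hw : w ≠ 0)
    (f : ℕ → ℂ)
    (hf : ∀ k, ‖f k‖ = ‖(w / 2) ^ (s + 2 * (k : ℂ)) / ((k.factorial : ℂ) * Complex.Gamma (s + (k:ℂ) + 1))‖) :
    ‖∑' k, f k‖ ≤ (‖w‖ / 2) ^ s.re * Real.exp (π * |s.im|) / ‖Complex.Gamma (s + 1)‖ *
      Real.exp (‖w‖) := by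
  set a := ‖w‖ with ha
  set K := (a / 2) ^ s.re * Real.exp (π * |s.im|) / ‖Complex.Gamma (s + 1)‖ with hK
  have hKnn : 0 ≤ K := by positivity
  have hsum : Summable (fun k : ℕ => a ^ (2*k) / (2*k).factorial) :=
    (Real.summable_pow_div_factorial a).comp_injective (mul_right_injective₀ two_ne_zero)
  have hhs : HasSum (fun k : ℕ => K * (a ^ (2*k) / (2*k).factorial))
      (K * ∑' k : ℕ, a ^ (2*k) / (2*k).factorial) := hsum.hasSum.mul_left K
  have hbound := tsum_of_norm_bounded hhs (fun k => by
    rw [hf k]; exact term_bound hs hw k)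
  refine hbound.trans ?_
  refine mul_le_mul_of_nonneg_left ?_ hKnn
  have h1 : Real.exp a = ∑' n : ℕ, a ^ n / n.factorial := by
    rw [Real.exp_eq_exp_ℝ, NormedSpace.exp_eq_tsum_div]
  rw [h1]
  exact Summable.tsum_le_tsum_of_inj (fun k => 2*k) (mul_right_injective₀ two_ne_zero)
    (fun c _ => by positivity) (fun k => le_rfl) hsum (Real.summable_pow_div_factorial a)

lemma besselJ_norm_le {s : ℂ} (hs : -(1/2:ℝ) < s.re) {w : ℂ} (hw : w ≠ 0) :
    ‖besselJ s w‖ ≤ (‖w‖ / 2) ^ s.re * Real.exp (π * |s.im|) /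
      ‖Complex.Gamma (s + 1)‖ * Real.exp (‖w‖) := by
  refine bessel_sum_bound hs hw _ (fun k => ?_)
  rw [mul_div_assoc, norm_mul, norm_pow, norm_neg, norm_one, one_pow, one_mul]

lemma besselI_norm_le {s : ℂ} (hs : -(1/2:ℝ) < s.re) {w : ℂ} (hw : w ≠ 0) :
    ‖besselI s w‖ ≤ (‖w‖ / 2) ^ s.re * Real.exp (π * |s.im|) /
      ‖Complex.Gamma (s + 1)‖ * Real.exp (‖w‖) :=
  bessel_sum_bound hs hw _ (fun _ => rfl)

lemma calJ_norm_le {s : ℂ} (hs : -(1/2:ℝ) < s.re) {z : ℂ} (hz : z ≠ 0) :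
    ‖calJ s z‖ ≤ ((2*π) ^ s.re * Real.exp (π * |s.im|) / ‖Complex.Gamma (s + 1)‖)^2 *
      Real.exp (8*π*Real.sqrt (‖z‖)) * (‖z‖) ^ s.re := by
  have hB : (0:ℝ) < ‖Complex.Gamma (s + 1)‖ := by
    rw [norm_pos_iff]
    exact Complex.Gamma_ne_zero_of_re_pos (by simp; linarith)
  have hx : (0:ℝ) < ‖z‖ := norm_pos_iff.mpr hz
  set x := ‖z‖ with hxdef
  -- abs of the bessel arguments
  have habs : ∀ u : ℂ, u ≠ 0 → ‖4 * (π:ℂ) * u ^ (1/2 : ℂ)‖ = 4*π* (‖u‖) ^ (1/2:ℝ) := by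
    intro u hu
    have h12 : (1/2 : ℂ) = ((1/2 : ℝ) : ℂ) := by norm_num
    rw [norm_mul, norm_mul, h12, Complex.norm_cpow_real, Complex.norm_real,
      Real.norm_of_nonneg Real.pi_nonneg]
    norm_num
  have hne : ∀ u : ℂ, u ≠ 0 → 4 * (π:ℂ) * u ^ (1/2 : ℂ) ≠ 0 := by
    intro u hu
    refine mul_ne_zero (mul_ne_zero (by norm_num) ?_) ?_
    · exact_mod_cast Real.pi_ne_zero
    · simp [Complex.cpow_eq_zero_iff, hu]
  -- generic bound for one factor with |u| = x
  set K : ℝ := (2*π*x^(1/2:ℝ)) ^ s.re * Real.exp (π * |s.im|) / ‖Complex.Gamma (s + 1)‖ with hKdef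
  have hKnn : 0 ≤ K := by positivity
  have hfacJ : ∀ u : ℂ, u ≠ 0 → ‖u‖ = x →
      ‖besselJ s (4 * (π:ℂ) * u ^ (1/2 : ℂ))‖ ≤ K * Real.exp (4*π*x^(1/2:ℝ)) := by
    intro u hu hux
    have h := besselJ_norm_le hs (hne u hu)
    rw [habs u hu, hux, show (4*π*x^(1/2:ℝ))/2 = 2*π*x^(1/2:ℝ) by ring] at h
    exact h
  have hfacI : ∀ u : ℂ, u ≠ 0 → ‖u‖ = x →
      ‖besselI s (4 * (π:ℂ) * u ^ (1/2 : ℂ))‖ ≤ K * Real.exp (4*π*x^(1/2:ℝ)) := by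
    intro u hu hux
    have h := besselI_norm_le hs (hne u hu)
    rw [habs u hu, hux, show (4*π*x^(1/2:ℝ))/2 = 2*π*x^(1/2:ℝ) by ring] at h
    exact h
  -- the final algebraic identity
  have hfinal : (K * Real.exp (4*π*x^(1/2:ℝ))) * (K * Real.exp (4*π*x^(1/2:ℝ)))
      = ((2*π) ^ s.re * Real.exp (π * |s.im|) / ‖Complex.Gamma (s + 1)‖)^2 *
        Real.exp (8*π*Real.sqrt x) * x ^ s.re := by
    have hxr : (0:ℝ) < x^(1/2:ℝ) := Real.rpow_pos_of_pos hx _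
    have hsplit : (2*π*x^(1/2:ℝ)) ^ s.re = (2*π) ^ s.re * (x^(1/2:ℝ)) ^ s.re :=
      Real.mul_rpow (by positivity) (by positivity)
    have hkey : (x ^ (1/2:ℝ)) ^ s.re * (x ^ (1/2:ℝ)) ^ s.re = x ^ s.re := by
      rw [← Real.rpow_add hxr, ← Real.rpow_mul hx.le]
      norm_num
      rw [show (1/2 : ℝ) * (s.re + s.re) = s.re by ring]
    have hexp : Real.exp (4*π*x^(1/2:ℝ)) * Real.exp (4*π*x^(1/2:ℝ))
        = Real.exp (8*π*Real.sqrt x) := by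
      rw [← Real.exp_add, Real.sqrt_eq_rpow]
      ring_nf
    rw [hKdef, hsplit]
    rw [← hkey, ← hexp]
    field_simp
  -- branch on the definition of calJ
  unfold calJ
  split_ifs with h
  · have h2 : (starRingEnd ℂ) z ≠ 0 := by simpa using hz
    calc ‖besselJ s (4 * (π : ℂ) * z ^ (1 / 2 : ℂ)) *
          besselJ s (4 * (π : ℂ) * ((starRingEnd ℂ) z) ^ (1 / 2 : ℂ))‖
        = ‖besselJ s (4 * (π : ℂ) * z ^ (1 / 2 : ℂ))‖ *
          ‖besselJ s (4 * (π : ℂ) * ((starRingEnd ℂ) z) ^ (1 / 2 : ℂ))‖ := norm_mul _ _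
      _ ≤ (K * Real.exp (4*π*x^(1/2:ℝ))) * (K * Real.exp (4*π*x^(1/2:ℝ))) := by
          refine mul_le_mul (hfacJ z hz rfl) (hfacJ _ h2 (by simp [hxdef])) (norm_nonneg _) (by positivity)
      _ = _ := hfinal
  · have h1 : -z ≠ 0 := neg_ne_zero.mpr hz
    have h2 : -((starRingEnd ℂ) z) ≠ 0 := by simpa using hz
    calc ‖besselI s (4 * (π : ℂ) * (-z) ^ (1 / 2 : ℂ)) *
          besselI s (4 * (π : ℂ) * (-((starRingEnd ℂ) z)) ^ (1 / 2 : ℂ))‖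
        = ‖besselI s (4 * (π : ℂ) * (-z) ^ (1 / 2 : ℂ))‖ *
          ‖besselI s (4 * (π : ℂ) * (-((starRingEnd ℂ) z)) ^ (1 / 2 : ℂ))‖ := norm_mul _ _
      _ ≤ (K * Real.exp (4*π*x^(1/2:ℝ))) * (K * Real.exp (4*π*x^(1/2:ℝ))) := by
          refine mul_le_mul (hfacI _ h1 (by simp [hxdef])) (hfacI _ h2 (by simp [hxdef])) (norm_nonneg _) (by positivity)
      _ = _ := hfinal

theorem stmt5 (C : Set ℂ) (hC : IsCompact C) (hCre : ∀ s ∈ C, -(1 / 2 : ℝ) < s.re) :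
    ∃ M : ℝ, 0 < M ∧ ∀ s ∈ C, ∀ z : ℂ, z ≠ 0 →
      (‖z‖ ≤ 1 → ‖calJ s z‖ ≤ M * ‖z‖ ^ s.re) ∧
      (1 < ‖z‖ →
        ‖calJ s z‖ ≤ M * Real.exp (8 * π * Real.sqrt (‖z‖)) * ‖z‖ ^ s.re) := by
  rcases C.eq_empty_or_nonempty with hCe | hCne
  · exact ⟨1, one_pos, fun s hs => by simp [hCe] at hs⟩
  set F : ℂ → ℝ := fun s =>
    ((2*π) ^ s.re * Real.exp (π * |s.im|) / ‖Complex.Gamma (s + 1)‖)^2 with hFdef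
  have hGne : ∀ s ∈ C, Complex.Gamma (s + 1) ≠ 0 := fun s hs =>
    Complex.Gamma_ne_zero_of_re_pos (by simp; linarith [hCre s hs])
  have hFcont : ContinuousOn F C := by
    have f1 : Continuous fun s : ℂ => (2*π) ^ s.re := by
      rw [continuous_iff_continuousAt]
      intro s
      exact (Real.continuousAt_const_rpow (by positivity)).comp
        Complex.continuous_re.continuousAt
    have f2 : Continuous fun s : ℂ => Real.exp (π * |s.im|) :=
      Real.continuous_exp.comp (continuous_const.mul (continuous_abs.comp Complex.continuous_im))
    have f3 : ContinuousOn (fun s : ℂ => ‖Complex.Gamma (s + 1)‖) C := by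
      intro s hs
      have hd : DifferentiableAt ℂ Complex.Gamma (s + 1) := by
        refine Complex.differentiableAt_Gamma _ (fun m => ?_)
        intro h
        have : (s + 1).re = (-(m:ℂ)).re := by rw [h]
        simp at this
        have : (0:ℝ) ≤ (m:ℝ) := Nat.cast_nonneg m
        linarith [hCre s hs]
      have : ContinuousAt (fun s : ℂ => Complex.Gamma (s + 1)) s :=
        (hd.comp s ((differentiableAt_id.add_const 1))).continuousAt
      exact this.norm.continuousWithinAt
    exact (((f1.continuousOn.mul f2.continuousOn).div f3
      (fun s hs => norm_ne_zero_iff.mpr (hGne s hs))).pow 2)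
  obtain ⟨s₀, hs₀C, hmax'⟩ := hC.exists_isMaxOn hCne hFcont
  have hmax : ∀ s ∈ C, F s ≤ F s₀ := fun s hs => hmax' hs
  set M₀ := F s₀ with hM₀
  have hM₀nn : 0 ≤ M₀ := sq_nonneg _
  refine ⟨(M₀ + 1) * Real.exp (8*π), by positivity, fun s hsC z hz => ?_⟩
  have hxpos : (0:ℝ) < ‖z‖ := norm_pos_iff.mpr hz
  have hbase : ‖calJ s z‖ ≤ M₀ * Real.exp (8*π*Real.sqrt (‖z‖)) *
      ‖z‖ ^ s.re := by
    refine (calJ_norm_le (hCre s hsC) hz).trans ?_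
    have hFs : F s ≤ M₀ := hmax s hsC
    gcongr
  have hexp1 : (1:ℝ) ≤ Real.exp (8*π) := Real.one_le_exp (by positivity)
  constructor
  · intro hz1
    have hsq : Real.sqrt (‖z‖) ≤ 1 := Real.sqrt_le_one.mpr hz1
    have hexp2 : Real.exp (8*π*Real.sqrt (‖z‖)) ≤ Real.exp (8*π) := by
      apply Real.exp_le_exp.mpr
      nlinarith [Real.pi_pos, Real.sqrt_nonneg (‖z‖)]
    refine hbase.trans ?_
    calc M₀ * Real.exp (8*π*Real.sqrt (‖z‖)) * ‖z‖ ^ s.re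
        ≤ (M₀ + 1) * Real.exp (8*π) * ‖z‖ ^ s.re := by
          gcongr
          linarith
      _ = (M₀ + 1) * Real.exp (8*π) * ‖z‖ ^ s.re := rfl
  · intro _
    refine hbase.trans ?_
    gcongr
    nlinarith [Real.exp_pos (8*π)]
end
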